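/- Let Z(y_1,...,y_m) be a multiaffine real polynomial that is stable. Then Z has the strong Rayleigh property: for all distinct indices e,f and all real y ∈ ℝ^m, Z_e(y) Z_f(y) − Z_{ef}(y) Z(y) ≥ 0. -/

import Mathlib

open MvPolynomial

/-- The deletion `Z^e`: the polynomial `Z` with `y_e` set to `0`. -/
noncomputable def del {m : ℕ} (e : Fin m) (Z : MvPolynomial (Fin m) ℝ) : MvPolynomial (Fin m) ℝ :=
  aeval (fun i => if i = e then (0 : MvPolynomial (Fin m) ℝ) else X i) Z

/-- Multiaffine: every variable occurs to at most the first power. -/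
def Multiaffine {m : ℕ} (Z : MvPolynomial (Fin m) ℝ) : Prop :=
  ∀ e : Fin m, Z.degreeOf e ≤ 1

/-- The Rayleigh difference `ΔZ{e,f} = Z_e Z_f - Z_{ef} Z`. -/
noncomputable def Ray {m : ℕ} (e f : Fin m) (Z : MvPolynomial (Fin m) ℝ) : MvPolynomial (Fin m) ℝ :=
  pderiv e Z * pderiv f Z - pderiv f (pderiv e Z) * Z

/-- A real polynomial is stable if it does not vanish when all variables lie in the
open upper half-plane. -/
def Stable {m : ℕ} (Z : MvPolynomial (Fin m) ℝ) : Prop :=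
  ∀ y : Fin m → ℂ, (∀ e, 0 < (y e).im) →
    eval y (MvPolynomial.map (algebraMap ℝ ℂ) Z) ≠ 0

namespace StrongRayleighAux

variable {m : ℕ}

lemma del_monomial (e : Fin m) (s : Fin m →₀ ℕ) (c : ℝ) :
    del e (monomial s c) = if s e = 0 then monomial s c else 0 := by
  rw [del, aeval_monomial]
  split_ifs with h
  · rw [monomial_eq]
    congr 1
    apply Finsupp.prod_congr
    intro i hi
    have hie : i ≠ e := by
      intro hh; subst hh; exact (Finsupp.mem_support_iff.mp hi) h
    rw [if_neg hie]
  · rw [Finsupp.prod]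
    have he : e ∈ s.support := Finsupp.mem_support_iff.mpr h
    rw [Finset.prod_eq_zero he (by simp [pow_eq_zero_iff, h])]
    simp

lemma del_eq_sum (e : Fin m) (P : MvPolynomial (Fin m) ℝ) :
    del e P = ∑ s ∈ P.support, del e (monomial s (coeff s P)) := by
  unfold del
  rw [← map_sum, ← as_sum]

lemma mem_support_del {e : Fin m} {P : MvPolynomial (Fin m) ℝ} {t : Fin m →₀ ℕ}
    (ht : t ∈ (del e P).support) : t ∈ P.support ∧ t e = 0 := by
  rw [mem_support_iff, del_eq_sum, coeff_sum] at ht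
  obtain ⟨s, hs, hne⟩ := Finset.exists_ne_zero_of_sum_ne_zero ht
  rw [del_monomial] at hne
  by_cases h : s e = 0
  · rw [if_pos h, coeff_monomial] at hne
    split_ifs at hne with h2
    · subst h2; exact ⟨hs, h⟩
    · exact absurd rfl hne
  · rw [if_neg h] at hne
    simp at hne

lemma pderiv_eq_sum (e : Fin m) (P : MvPolynomial (Fin m) ℝ) :
    pderiv e P = ∑ s ∈ P.support, monomial (s - Finsupp.single e 1) (coeff s P * s e) := by
  conv_lhs => rw [as_sum P]
  rw [map_sum]
  exact Finset.sum_congr rfl fun s _ => pderiv_monomial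

lemma mem_support_pderiv {e : Fin m} {P : MvPolynomial (Fin m) ℝ} {t : Fin m →₀ ℕ}
    (ht : t ∈ (pderiv e P).support) :
    ∃ s ∈ P.support, t = s - Finsupp.single e 1 := by
  rw [mem_support_iff, pderiv_eq_sum, coeff_sum] at ht
  obtain ⟨s, hs, hne⟩ := Finset.exists_ne_zero_of_sum_ne_zero ht
  rw [coeff_monomial] at hne
  split_ifs at hne with h
  · exact ⟨s, hs, h.symm⟩
  · exact absurd rfl hne

lemma pderiv_eq_zero_of_notdep {e : Fin m} {P : MvPolynomial (Fin m) ℝ}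
    (h : ∀ s ∈ P.support, s e = 0) : pderiv e P = 0 := by
  apply pderiv_eq_zero_of_notMem_vars
  rw [mem_vars]
  rintro ⟨s, hs, hes⟩
  exact (Finsupp.mem_support_iff.mp hes) (h s hs)

lemma decomp (e : Fin m) (P : MvPolynomial (Fin m) ℝ)
    (h : ∀ s ∈ P.support, s e ≤ 1) :
    P = del e P + X e * pderiv e P := by
  have key : ∀ s ∈ P.support,
      monomial s (coeff s P) =
        del e (monomial s (coeff s P)) + X e * pderiv e (monomial s (coeff s P)) := by
    intro s hs
    rcases Nat.le_one_iff_eq_zero_or_eq_one.mp (h s hs) with h0 | h1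
    · rw [del_monomial, if_pos h0, pderiv_monomial, h0]
      simp
    · rw [del_monomial, if_neg (by omega), pderiv_monomial, h1, Nat.cast_one, mul_one, zero_add]
      rw [X, monomial_mul, one_mul]
      have hsingle : Finsupp.single e 1 + (s - Finsupp.single e 1) = s := by
        ext j
        rcases eq_or_ne j e with rfl | hje
        · simp [Finsupp.add_apply, Finsupp.tsub_apply, Finsupp.single_eq_same, h1]
        · simp [Finsupp.add_apply, Finsupp.tsub_apply, Finsupp.single_eq_of_ne' (Ne.symm hje)]
      rw [hsingle]
  calc P = ∑ s ∈ P.support, monomial s (coeff s P) := as_sum P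
    _ = ∑ s ∈ P.support,
        (del e (monomial s (coeff s P)) + X e * pderiv e (monomial s (coeff s P))) :=
      Finset.sum_congr rfl key
    _ = del e P + X e * pderiv e P := by
      rw [Finset.sum_add_distrib, ← Finset.mul_sum, ← del_eq_sum]
      congr 1
      rw [← map_sum, ← as_sum]

lemma eval_congr_of {R : Type*} [CommSemiring R] {P : MvPolynomial (Fin m) R} {e : Fin m}
    (h : ∀ s ∈ P.support, s e = 0) {y y' : Fin m → R} (hy : ∀ j, j ≠ e → y j = y' j) :
    eval y P = eval y' P := by
  rw [eval_eq, eval_eq]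
  refine Finset.sum_congr rfl fun s hs => ?_
  congr 1
  refine Finset.prod_congr rfl fun j hj => ?_
  have hje : j ≠ e := by
    intro hh; subst hh; exact (Finsupp.mem_support_iff.mp hj) (h s hs)
  rw [hy j hje]

end StrongRayleighAux

open StrongRayleighAux Filter Complex in
theorem stable_implies_strong_rayleigh {m : ℕ} (Z : MvPolynomial (Fin m) ℝ)
    (hZ : Multiaffine Z) (hstab : Stable Z) :
    ∀ e f : Fin m, e ≠ f → ∀ y : Fin m → ℝ, 0 ≤ eval y (Ray e f Z) := by
  intro e f hef y
  set φ := algebraMap ℝ ℂ with hφ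
  -- affineness of supports
  have haff : ∀ (g : Fin m) (s : Fin m →₀ ℕ), s ∈ Z.support → s g ≤ 1 := fun g s hs =>
    le_trans (monomial_le_degreeOf g hs) (hZ g)
  -- the four coefficient polynomials
  set a := del f (del e Z) with ha
  set c1 := pderiv f (del e Z) with hc1
  set b1 := del f (pderiv e Z) with hb1
  set Pd := pderiv f (pderiv e Z) with hPd
  -- support facts
  have hsuppPe : ∀ s ∈ (pderiv e Z).support, s e = 0 ∧ s f ≤ 1 := by
    intro s hs
    obtain ⟨u, hu, rfl⟩ := mem_support_pderiv hs
    constructor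
    · have := haff e u hu
      rw [Finsupp.tsub_apply, Finsupp.single_eq_same]
      omega
    · have := haff f u hu
      rw [Finsupp.tsub_apply, Finsupp.single_eq_of_ne' hef]
      omega
  have hsuppdelE : ∀ s ∈ (del e Z).support, s e = 0 ∧ s f ≤ 1 := by
    intro s hs
    obtain ⟨hu, h0⟩ := mem_support_del hs
    exact ⟨h0, haff f s hu⟩
  have hNa : ∀ s ∈ a.support, s e = 0 ∧ s f = 0 := by
    intro s hs
    obtain ⟨hu, h0⟩ := mem_support_del hs
    exact ⟨(hsuppdelE s hu).1, h0⟩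
  have hNb : ∀ s ∈ b1.support, s e = 0 ∧ s f = 0 := by
    intro s hs
    obtain ⟨hu, h0⟩ := mem_support_del hs
    exact ⟨(hsuppPe s hu).1, h0⟩
  have hNc : ∀ s ∈ c1.support, s e = 0 ∧ s f = 0 := by
    intro s hs
    obtain ⟨u, hu, rfl⟩ := mem_support_pderiv hs
    obtain ⟨he0, hf1⟩ := hsuppdelE u hu
    constructor
    · rw [Finsupp.tsub_apply, Finsupp.single_eq_of_ne' (Ne.symm hef)]
      omega
    · rw [Finsupp.tsub_apply, Finsupp.single_eq_same]
      omega
  have hNd : ∀ s ∈ Pd.support, s e = 0 ∧ s f = 0 := by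
    intro s hs
    obtain ⟨u, hu, rfl⟩ := mem_support_pderiv hs
    obtain ⟨he0, hf1⟩ := hsuppPe u hu
    constructor
    · rw [Finsupp.tsub_apply, Finsupp.single_eq_of_ne' (Ne.symm hef)]
      omega
    · rw [Finsupp.tsub_apply, Finsupp.single_eq_same]
      omega
  -- the decomposition identities
  have I1 : Z = del e Z + X e * pderiv e Z := decomp e Z (haff e)
  have I2 : del e Z = a + X f * c1 := decomp f (del e Z) (fun s hs => (hsuppdelE s hs).2)
  have I3 : pderiv e Z = b1 + X f * Pd := decomp f (pderiv e Z) (fun s hs => (hsuppPe s hs).2)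
  have IZ : Z = a + X f * c1 + X e * (b1 + X f * Pd) := by
    rw [I1, I2, I3]
  have IPf : pderiv f Z = c1 + X e * Pd := by
    have hza : pderiv f a = 0 := pderiv_eq_zero_of_notdep (fun s hs => (hNa s hs).2)
    have hzc : pderiv f c1 = 0 := pderiv_eq_zero_of_notdep (fun s hs => (hNc s hs).2)
    have hzb : pderiv f b1 = 0 := pderiv_eq_zero_of_notdep (fun s hs => (hNb s hs).2)
    have hzd : pderiv f Pd = 0 := pderiv_eq_zero_of_notdep (fun s hs => (hNd s hs).2)
    conv_lhs => rw [IZ]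
    simp only [map_add, pderiv_mul, hza, hzc, hzb, hzd, pderiv_X_self, pderiv_X_of_ne hef]
    ring
  -- the real numbers
  set α := eval y a with hα
  set β := eval y b1 with hβ
  set γ := eval y c1 with hγ
  set δ := eval y Pd with hδ
  have hZy : eval y Z = α + y f * γ + y e * (β + y f * δ) := by
    conv_lhs => rw [IZ]
    simp [map_add, map_mul, eval_X]
    rfl
  have hPey : eval y (pderiv e Z) = β + y f * δ := by
    conv_lhs => rw [I3]
    simp [map_add, map_mul, eval_X]
    rfl
  have hPfy : eval y (pderiv f Z) = γ + y e * δ := by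
    conv_lhs => rw [IPf]
    simp [map_add, map_mul, eval_X]
    rfl
  have hray : eval y (Ray e f Z) = β * γ - α * δ := by
    rw [Ray, map_sub, map_mul, map_mul, hZy, hPey, hPfy]
    ring
  rw [hray]
  by_contra hlt
  push_neg at hlt
  -- complex side
  set pt : ℝ → Fin m → ℂ := fun ε j => (y j : ℂ) + ε * I with hpt
  have hpt_cont : Continuous pt := by
    apply continuous_pi
    intro j
    exact continuous_const.add (continuous_ofReal.mul continuous_const)
  have heval0 : ∀ Q : MvPolynomial (Fin m) ℝ,
      eval (pt 0) (MvPolynomial.map φ Q) = (eval y Q : ℂ) := by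
    intro Q
    have hpt0 : pt 0 = fun j => φ (y j) := by
      funext j
      simp [hpt, hφ, Complex.ofReal_zero]
    rw [hpt0, eval_map]
    have h2 := eval₂_comp_left φ (RingHom.id ℝ) y Q
    rw [eval₂_id, RingHom.comp_id] at h2
    exact h2.symm
  set A : ℝ → ℂ := fun ε => eval (pt ε) (MvPolynomial.map φ a) with hA
  set B : ℝ → ℂ := fun ε => eval (pt ε) (MvPolynomial.map φ b1) with hB
  set C : ℝ → ℂ := fun ε => eval (pt ε) (MvPolynomial.map φ c1) with hC
  set D : ℝ → ℂ := fun ε => eval (pt ε) (MvPolynomial.map φ Pd) with hD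
  have hcont : ∀ Q : MvPolynomial (Fin m) ℝ,
      Continuous fun ε => eval (pt ε) (MvPolynomial.map φ Q) := by
    intro Q
    show Continuous ((fun x => eval x (MvPolynomial.map φ Q)) ∘ pt)
    exact (MvPolynomial.continuous_eval (MvPolynomial.map φ Q)).comp hpt_cont
  have hA0 : A 0 = (α : ℂ) := heval0 a
  have hB0 : B 0 = (β : ℂ) := heval0 b1
  have hC0 : C 0 = (γ : ℂ) := heval0 c1
  have hD0 : D 0 = (δ : ℂ) := heval0 Pd
  -- denominator nonzero at 0
  have hden0 : C 0 + D 0 * I ≠ 0 := by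
    rw [hC0, hD0]
    intro h
    have hre : γ = 0 := by
      have := congrArg Complex.re h
      simpa using this
    have him : δ = 0 := by
      have := congrArg Complex.im h
      simpa using this
    rw [hre, him] at hlt
    simp at hlt
  set v : ℝ → ℂ := fun ε => -(A ε + B ε * I) / (C ε + D ε * I) with hv
  have hv0im : 0 < (v 0).im := by
    rw [hv]
    simp only
    rw [hA0, hB0, hC0, hD0, Complex.div_im]
    have hN : 0 < Complex.normSq ((γ : ℂ) + (δ : ℂ) * I) := by
      rw [hC0, hD0] at hden0
      exact Complex.normSq_pos.mpr hden0
    have h1 : (-((α : ℂ) + (β : ℂ) * I)).im = -β := by simp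
    have h2 : (-((α : ℂ) + (β : ℂ) * I)).re = -α := by simp
    have h3 : ((γ : ℂ) + (δ : ℂ) * I).re = γ := by simp
    have h4 : ((γ : ℂ) + (δ : ℂ) * I).im = δ := by simp
    rw [h1, h2, h3, h4]
    rw [div_sub_div_same]
    apply div_pos _ hN
    nlinarith
  -- choose a small positive ε
  have hvcont : ContinuousAt v 0 := by
    apply ContinuousAt.div
    · exact ((hcont a).neg.sub ((hcont b1).mul continuous_const)).continuousAt.congr
        (by filter_upwards with ε; simp [hv, hA, hB]; ring)
    · exact ((hcont c1).add ((hcont Pd).mul continuous_const)).continuousAt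
    · exact hden0
  have hev1 : ∀ᶠ ε in nhds (0 : ℝ), 0 < (v ε).im :=
    ((Complex.continuous_im.continuousAt.comp hvcont)).eventually (eventually_gt_nhds hv0im)
  have hev2 : ∀ᶠ ε in nhds (0 : ℝ), C ε + D ε * I ≠ 0 :=
    (((hcont c1).add ((hcont Pd).mul continuous_const)).continuousAt).eventually_ne hden0
  have hev3 : ∀ᶠ ε in nhdsWithin (0:ℝ) (Set.Ioi 0),
      (0 < (v ε).im ∧ C ε + D ε * I ≠ 0) ∧ ε ∈ Set.Ioi (0:ℝ) :=
    Filter.Eventually.and ((hev1.and hev2).filter_mono nhdsWithin_le_nhds)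
      eventually_mem_nhdsWithin
  obtain ⟨ε, ⟨himv, hne⟩, hεpos⟩ := hev3.exists
  -- the point where Z vanishes
  set q : Fin m → ℂ := Function.update (Function.update (pt ε) e I) f (v ε) with hq
  have hqf : q f = v ε := by
    rw [hq, Function.update_self]
  have hqe : q e = I := by
    rw [hq, Function.update_of_ne hef, Function.update_self]
  have hqother : ∀ j, j ≠ e → j ≠ f → q j = pt ε j := by
    intro j hje hjf
    rw [hq, Function.update_of_ne hjf, Function.update_of_ne hje]
  have hqim : ∀ j, 0 < (q j).im := by
    intro j
    rcases eq_or_ne j f with rfl | hjf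
    · rw [hqf]; exact himv
    rcases eq_or_ne j e with rfl | hje
    · rw [hqe]; simp
    · rw [hqother j hje hjf]
      simp only [hpt]
      simpa using Set.mem_Ioi.mp hεpos
  -- evaluations of the coefficient polynomials at q
  have hinsens : ∀ Q : MvPolynomial (Fin m) ℝ, (∀ s ∈ Q.support, s e = 0 ∧ s f = 0) →
      eval q (MvPolynomial.map φ Q) = eval (pt ε) (MvPolynomial.map φ Q) := by
    intro Q hQ
    have hsupp : ∀ s ∈ (MvPolynomial.map φ Q).support, s ∈ Q.support :=
      fun s hs => support_map_subset φ Q hs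
    have step1 : eval q (MvPolynomial.map φ Q) =
        eval (Function.update (pt ε) e I) (MvPolynomial.map φ Q) := by
      apply eval_congr_of (fun s hs => (hQ s (hsupp s hs)).2)
      intro j hjf
      rw [hq, Function.update_of_ne hjf]
    rw [step1]
    apply eval_congr_of (fun s hs => (hQ s (hsupp s hs)).1)
    intro j hje
    rw [Function.update_of_ne hje]
  have hZq : eval q (MvPolynomial.map φ Z) = 0 := by
    have hmapZ : MvPolynomial.map φ Z =
        MvPolynomial.map φ a + X f * MvPolynomial.map φ c1 +
          X e * (MvPolynomial.map φ b1 + X f * MvPolynomial.map φ Pd) := by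
      conv_lhs => rw [IZ]
      simp [map_add, map_mul, map_X]
    rw [hmapZ]
    rw [map_add, map_add, map_mul, map_mul, map_add, map_mul, eval_X, eval_X,
      hinsens a hNa, hinsens c1 hNc, hinsens b1 hNb, hinsens Pd hNd, hqe, hqf]
    show A ε + v ε * C ε + I * (B ε + v ε * D ε) = 0
    rw [hv]
    beta_reduce
    rw [show ∀ w : ℂ, A ε + w * C ε + I * (B ε + w * D ε) = (A ε + B ε * I) + w * (C ε + D ε * I) from
      fun w => by ring, div_mul_cancel₀ _ hne]
    ring
  exact hstab q hqim hZq
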